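/- arXiv:math-ph/0306068 — 4 statements merged into one kernel-verified Lean document; each statement's English description precedes it below -/
import Mathlib

section
/- Fix B > 0, m ∈ ℤ, and k ∈ ℂ, and set a = ½(|m| + m + 1 − (k − B)/B) and b = |m| + 1. If u : (0,∞) → ℂ is twice differentiable and satisfies Kummer's confluent hypergeometric equation x u''(x) + (b − x) u'(x) − a u(x) = 0 for all x > 0, then the function φ(r) = r^{1/2 + |m|} e^{−Br²/4} u(Br²/2) is twice differentiable on (0,∞) and satisfies the spin-up radial Landau eigenvalue equation −φ''(r) + ( (m/r + B r/2)² − 1/(4r²) + B ) φ(r) = k φ(r) for all r > 0. -/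
open Set Complex

set_option maxHeartbeats 1600000 in
/-- If `u` solves Kummer's confluent hypergeometric equation with parameters
`a = ½(|m| + m + 1 − (k − B)/B)`, `b = |m| + 1`, then
`φ(r) = r^{1/2+|m|} e^{−Br²/4} u(Br²/2)` is twice differentiable on `(0,∞)` and solves
the spin-up radial Landau eigenvalue equation
`−φ'' + ((m/r + Br/2)² − 1/(4r²) + B) φ = k φ`. -/
theorem stmt_4 (B : ℝ) (hB : 0 < B) (m : ℤ) (k : ℂ) (a b : ℂ)
    (ha : a = (1 / 2) * (((|m| : ℤ) : ℂ) + (m : ℂ) + 1 - (k - (B : ℂ)) / (B : ℂ)))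
    (hb : b = ((|m| : ℤ) : ℂ) + 1)
    (u : ℝ → ℂ)
    (hu : ∀ x ∈ Set.Ioi (0 : ℝ), DifferentiableAt ℝ u x ∧ DifferentiableAt ℝ (deriv u) x)
    (hKummer : ∀ x ∈ Set.Ioi (0 : ℝ),
      (x : ℂ) * deriv (deriv u) x + (b - (x : ℂ)) * deriv u x - a * u x = 0)
    (φ : ℝ → ℂ)
    (hφ : ∀ r : ℝ, φ r =
      ((r ^ ((1 : ℝ) / 2 + (|m| : ℝ)) : ℝ) : ℂ) * Complex.exp (-(B : ℂ) * (r : ℂ) ^ 2 / 4) *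
        u (B * r ^ 2 / 2)) :
    (∀ r ∈ Set.Ioi (0 : ℝ), DifferentiableAt ℝ φ r ∧ DifferentiableAt ℝ (deriv φ) r) ∧
    ∀ r ∈ Set.Ioi (0 : ℝ),
      -(deriv (deriv φ) r) +
        (((((m : ℝ) / r + B * r / 2) ^ 2 - 1 / (4 * r ^ 2) + B : ℝ)) : ℂ) * φ r = k * φ r := by
  have hφeq : φ = fun r : ℝ =>
      ((r ^ ((1 : ℝ) / 2 + (|m| : ℝ)) : ℝ) : ℂ) * Complex.exp (-(B : ℂ) * (r : ℂ) ^ 2 / 4) *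
        u (B * r ^ 2 / 2) := funext hφ
  subst hφeq
  have hBne : (B : ℂ) ≠ 0 := by exact_mod_cast hB.ne'
  -- helper : derivative of v ∘ (B r²/2)
  have hginner : ∀ r : ℝ, HasDerivAt (fun s : ℝ => B * s ^ 2 / 2) (B * r) r := by
    intro r
    have := ((hasDerivAt_pow 2 r).const_mul B).div_const 2
    refine this.congr_deriv ?_
    push_cast; ring
  have hcomp : ∀ (v : ℝ → ℂ) (r : ℝ), DifferentiableAt ℝ v (B * r ^ 2 / 2) →
      HasDerivAt (fun s : ℝ => v (B * s ^ 2 / 2)) ((B * r) • deriv v (B * r ^ 2 / 2)) r := by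
    intro v r hv
    exact (hv.hasDerivAt.scomp r (hginner r))
  have hxmem : ∀ r : ℝ, 0 < r → B * r ^ 2 / 2 ∈ Set.Ioi (0 : ℝ) := by
    intro r hr; simp only [Set.mem_Ioi]; positivity
  -- derivative of the exponential factor
  have hE : ∀ r : ℝ, HasDerivAt (fun s : ℝ => Complex.exp (-(B : ℂ) * (s : ℂ) ^ 2 / 4))
      (Complex.exp (-(B : ℂ) * (r : ℂ) ^ 2 / 4) * (-(B : ℂ) * (r : ℂ) / 2)) r := by
    intro r
    have h1 : HasDerivAt (fun s : ℝ => ((s : ℂ))) 1 r := Complex.ofRealCLM.hasDerivAt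
    have hsq : HasDerivAt (fun s : ℝ => ((s : ℂ)) ^ 2) (2 * (r : ℂ)) r := by
      simp only [pow_two]
      refine (h1.mul h1).congr_deriv ?_
      ring
    have h2 := ((hsq.const_mul (-(B : ℂ))).div_const 4).cexp
    refine h2.congr_deriv ?_
    ring
  -- derivative of the rpow factor
  have hP : ∀ r : ℝ, 0 < r → HasDerivAt (fun s : ℝ => ((s ^ ((1 : ℝ) / 2 + (|m| : ℝ)) : ℝ) : ℂ))
      (((((1 : ℝ) / 2 + (|m| : ℝ)) * r ^ (((1 : ℝ) / 2 + (|m| : ℝ)) - 1) : ℝ) : ℂ)) r := by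
    intro r hr
    exact (Real.hasDerivAt_rpow_const (Or.inl hr.ne')).ofReal_comp
  -- first derivative of φ
  have hD1 : ∀ r : ℝ, 0 < r → HasDerivAt
      (fun s : ℝ => ((s ^ ((1 : ℝ) / 2 + (|m| : ℝ)) : ℝ) : ℂ) * Complex.exp (-(B : ℂ) * (s : ℂ) ^ 2 / 4) *
        u (B * s ^ 2 / 2))
      ( ((((1 : ℝ) / 2 + (|m| : ℝ)) * r ^ (((1 : ℝ) / 2 + (|m| : ℝ)) - 1) : ℝ) : ℂ) * Complex.exp (-(B : ℂ) * (r : ℂ) ^ 2 / 4) * u (B * r ^ 2 / 2)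
        + ((r ^ ((1 : ℝ) / 2 + (|m| : ℝ)) : ℝ) : ℂ) * (Complex.exp (-(B : ℂ) * (r : ℂ) ^ 2 / 4) * (-(B : ℂ) * (r : ℂ) / 2))
            * u (B * r ^ 2 / 2)
        + ((r ^ ((1 : ℝ) / 2 + (|m| : ℝ)) : ℝ) : ℂ) * Complex.exp (-(B : ℂ) * (r : ℂ) ^ 2 / 4) *
            (((B * r : ℝ) : ℂ) * deriv u (B * r ^ 2 / 2)) ) r := by
    intro r hr
    have h := ((hP r hr).mul (hE r)).mul (hcomp u r (hu _ (hxmem r hr)).1)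
    refine h.congr_deriv ?_
    simp [smul_eq_mul]
    ring

  -- second derivative
  have hD2 : ∀ r : ℝ, 0 < r → HasDerivAt
      (fun s : ℝ => (((((1 : ℝ) / 2 + (|m| : ℝ)) * s ^ (((1 : ℝ) / 2 + (|m| : ℝ)) - 1) : ℝ)) : ℂ) * Complex.exp (-(B : ℂ) * (s : ℂ) ^ 2 / 4) * u (B * s ^ 2 / 2)
        + ((s ^ ((1 : ℝ) / 2 + (|m| : ℝ)) : ℝ) : ℂ) * (Complex.exp (-(B : ℂ) * (s : ℂ) ^ 2 / 4) * (-(B : ℂ) * (s : ℂ) / 2)) * u (B * s ^ 2 / 2)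
        + ((s ^ ((1 : ℝ) / 2 + (|m| : ℝ)) : ℝ) : ℂ) * Complex.exp (-(B : ℂ) * (s : ℂ) ^ 2 / 4) * (((B * s : ℝ) : ℂ) * deriv u (B * s ^ 2 / 2)))
      ( (((((1 : ℝ) / 2 + (|m| : ℝ)) * ((((1 : ℝ) / 2 + (|m| : ℝ)) - 1) * r ^ (((1 : ℝ) / 2 + (|m| : ℝ)) - 2)) : ℝ)) : ℂ) * Complex.exp (-(B : ℂ) * (r : ℂ) ^ 2 / 4) * u (B * r ^ 2 / 2)
        + 2 * (((((1 : ℝ) / 2 + (|m| : ℝ)) * r ^ (((1 : ℝ) / 2 + (|m| : ℝ)) - 1) : ℝ)) : ℂ) * (Complex.exp (-(B : ℂ) * (r : ℂ) ^ 2 / 4) * (-(B : ℂ) * (r : ℂ) / 2)) * u (B * r ^ 2 / 2)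
        + 2 * (((((1 : ℝ) / 2 + (|m| : ℝ)) * r ^ (((1 : ℝ) / 2 + (|m| : ℝ)) - 1) : ℝ)) : ℂ) * Complex.exp (-(B : ℂ) * (r : ℂ) ^ 2 / 4) * (((B * r : ℝ) : ℂ) * deriv u (B * r ^ 2 / 2))
        + ((r ^ ((1 : ℝ) / 2 + (|m| : ℝ)) : ℝ) : ℂ) * (Complex.exp (-(B : ℂ) * (r : ℂ) ^ 2 / 4) * (-(B : ℂ) * (r : ℂ) / 2) ^ 2) * u (B * r ^ 2 / 2)
        + ((r ^ ((1 : ℝ) / 2 + (|m| : ℝ)) : ℝ) : ℂ) * (Complex.exp (-(B : ℂ) * (r : ℂ) ^ 2 / 4) * (-(B : ℂ) / 2)) * u (B * r ^ 2 / 2)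
        + 2 * ((r ^ ((1 : ℝ) / 2 + (|m| : ℝ)) : ℝ) : ℂ) * (Complex.exp (-(B : ℂ) * (r : ℂ) ^ 2 / 4) * (-(B : ℂ) * (r : ℂ) / 2)) * (((B * r : ℝ) : ℂ) * deriv u (B * r ^ 2 / 2))
        + ((r ^ ((1 : ℝ) / 2 + (|m| : ℝ)) : ℝ) : ℂ) * Complex.exp (-(B : ℂ) * (r : ℂ) ^ 2 / 4) * ((B : ℂ) * deriv u (B * r ^ 2 / 2))
        + ((r ^ ((1 : ℝ) / 2 + (|m| : ℝ)) : ℝ) : ℂ) * Complex.exp (-(B : ℂ) * (r : ℂ) ^ 2 / 4) * (((B * r : ℝ) : ℂ) ^ 2 * deriv (deriv u) (B * r ^ 2 / 2)) ) r := by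
    intro r hr
    have hxm := hxmem r hr
    have h1 : HasDerivAt (fun s : ℝ => ((s : ℂ))) 1 r := Complex.ofRealCLM.hasDerivAt
    have hlin : HasDerivAt (fun s : ℝ => -(B : ℂ) * (s : ℂ) / 2) (-(B : ℂ) / 2) r := by
      have := (h1.const_mul (-(B : ℂ))).div_const 2
      refine this.congr_deriv ?_
      ring
    have hBr : HasDerivAt (fun s : ℝ => ((B * s : ℝ) : ℂ)) (((B : ℝ) : ℂ)) r := by
      have := ((hasDerivAt_id r).const_mul B).ofReal_comp
      refine this.congr_deriv ?_
      push_cast; ring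
    have hP1 : HasDerivAt (fun s : ℝ => (((((1 : ℝ) / 2 + (|m| : ℝ)) * s ^ (((1 : ℝ) / 2 + (|m| : ℝ)) - 1) : ℝ)) : ℂ))
        ((((((1 : ℝ) / 2 + (|m| : ℝ)) * ((((1 : ℝ) / 2 + (|m| : ℝ)) - 1) * r ^ (((1 : ℝ) / 2 + (|m| : ℝ)) - 1 - 1)) : ℝ)) : ℂ)) r :=
      ((Real.hasDerivAt_rpow_const (p := ((1 : ℝ) / 2 + (|m| : ℝ)) - 1) (Or.inl hr.ne')).const_mul ((1 : ℝ) / 2 + (|m| : ℝ))).ofReal_comp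
    have hU := hcomp u r (hu _ hxm).1
    have hU1 := hcomp (deriv u) r (hu _ hxm).2
    have t1 := (hP1.mul (hE r)).mul hU
    have t2 := ((hP r hr).mul ((hE r).mul hlin)).mul hU
    have t3 := ((hP r hr).mul (hE r)).mul (hBr.mul hU1)
    have h := (t1.add t2).add t3
    refine h.congr_deriv ?_
    have e1 : (((1 : ℝ) / 2 + (|m| : ℝ)) - 1 - 1 : ℝ) = ((1 : ℝ) / 2 + (|m| : ℝ)) - 2 := by ring
    rw [e1]
    simp only [Complex.real_smul, Pi.mul_apply]
    push_cast
    ring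
  -- derivative of deriv φ
  have hstep : ∀ r : ℝ, 0 < r → HasDerivAt
      (deriv (fun s : ℝ => ((s ^ ((1 : ℝ) / 2 + (|m| : ℝ)) : ℝ) : ℂ) * Complex.exp (-(B : ℂ) * (s : ℂ) ^ 2 / 4) * u (B * s ^ 2 / 2)))
      ( (((((1 : ℝ) / 2 + (|m| : ℝ)) * ((((1 : ℝ) / 2 + (|m| : ℝ)) - 1) * r ^ (((1 : ℝ) / 2 + (|m| : ℝ)) - 2)) : ℝ)) : ℂ) * Complex.exp (-(B : ℂ) * (r : ℂ) ^ 2 / 4) * u (B * r ^ 2 / 2)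
        + 2 * (((((1 : ℝ) / 2 + (|m| : ℝ)) * r ^ (((1 : ℝ) / 2 + (|m| : ℝ)) - 1) : ℝ)) : ℂ) * (Complex.exp (-(B : ℂ) * (r : ℂ) ^ 2 / 4) * (-(B : ℂ) * (r : ℂ) / 2)) * u (B * r ^ 2 / 2)
        + 2 * (((((1 : ℝ) / 2 + (|m| : ℝ)) * r ^ (((1 : ℝ) / 2 + (|m| : ℝ)) - 1) : ℝ)) : ℂ) * Complex.exp (-(B : ℂ) * (r : ℂ) ^ 2 / 4) * (((B * r : ℝ) : ℂ) * deriv u (B * r ^ 2 / 2))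
        + ((r ^ ((1 : ℝ) / 2 + (|m| : ℝ)) : ℝ) : ℂ) * (Complex.exp (-(B : ℂ) * (r : ℂ) ^ 2 / 4) * (-(B : ℂ) * (r : ℂ) / 2) ^ 2) * u (B * r ^ 2 / 2)
        + ((r ^ ((1 : ℝ) / 2 + (|m| : ℝ)) : ℝ) : ℂ) * (Complex.exp (-(B : ℂ) * (r : ℂ) ^ 2 / 4) * (-(B : ℂ) / 2)) * u (B * r ^ 2 / 2)
        + 2 * ((r ^ ((1 : ℝ) / 2 + (|m| : ℝ)) : ℝ) : ℂ) * (Complex.exp (-(B : ℂ) * (r : ℂ) ^ 2 / 4) * (-(B : ℂ) * (r : ℂ) / 2)) * (((B * r : ℝ) : ℂ) * deriv u (B * r ^ 2 / 2))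
        + ((r ^ ((1 : ℝ) / 2 + (|m| : ℝ)) : ℝ) : ℂ) * Complex.exp (-(B : ℂ) * (r : ℂ) ^ 2 / 4) * ((B : ℂ) * deriv u (B * r ^ 2 / 2))
        + ((r ^ ((1 : ℝ) / 2 + (|m| : ℝ)) : ℝ) : ℂ) * Complex.exp (-(B : ℂ) * (r : ℂ) ^ 2 / 4) * (((B * r : ℝ) : ℂ) ^ 2 * deriv (deriv u) (B * r ^ 2 / 2)) ) r := by
    intro r hr
    apply (hD2 r hr).congr_of_eventuallyEq
    filter_upwards [isOpen_Ioi.mem_nhds hr] with s hs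
    exact (hD1 s hs).deriv
  constructor
  · intro r hr
    exact ⟨(hD1 r hr).differentiableAt, (hstep r hr).differentiableAt⟩
  intro r hr
  have hr' : (0 : ℝ) < r := hr
  rw [(hstep r hr').deriv]
  beta_reduce
  have hrne : (r : ℂ) ≠ 0 := by exact_mod_cast hr'.ne'
  have e0 : r ^ ((1 : ℝ) / 2 + (|m| : ℝ)) = r ^ (((1 : ℝ) / 2 + (|m| : ℝ)) - 2) * r ^ 2 := by
    have h := Real.rpow_add hr' (((1 : ℝ) / 2 + (|m| : ℝ)) - 2) 2
    rw [Real.rpow_two, show (((1 : ℝ) / 2 + (|m| : ℝ)) - 2 + 2 : ℝ) = ((1 : ℝ) / 2 + (|m| : ℝ)) by ring] at h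
    exact h
  have e1 : r ^ (((1 : ℝ) / 2 + (|m| : ℝ)) - 1) = r ^ (((1 : ℝ) / 2 + (|m| : ℝ)) - 2) * r := by
    have h := Real.rpow_add hr' (((1 : ℝ) / 2 + (|m| : ℝ)) - 2) 1
    rw [Real.rpow_one, show (((1 : ℝ) / 2 + (|m| : ℝ)) - 2 + 1 : ℝ) = ((1 : ℝ) / 2 + (|m| : ℝ)) - 1 by ring] at h
    exact h
  rw [e1, e0]
  have hK := hKummer (B * r ^ 2 / 2) (hxmem r hr')
  rw [ha, hb] at hK
  push_cast at hK ⊢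
  have habs : ((|(m : ℝ)| : ℝ) : ℂ) = ((|m| : ℤ) : ℂ) := by norm_cast
  rw [habs]
  have hXne : (B : ℂ) * (r : ℂ) ^ 2 / 2 ≠ 0 := by
    apply div_ne_zero _ two_ne_zero
    exact mul_ne_zero hBne (pow_ne_zero 2 hrne)
  have hu2 : deriv (deriv u) (B * r ^ 2 / 2) =
      ((1 / 2) * (((|m| : ℤ) : ℂ) + (m : ℂ) + 1 - (k - (B : ℂ)) / (B : ℂ)) * u (B * r ^ 2 / 2)
        - ((((|m| : ℤ) : ℂ) + 1) - (B : ℂ) * (r : ℂ) ^ 2 / 2) * deriv u (B * r ^ 2 / 2))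
        / ((B : ℂ) * (r : ℂ) ^ 2 / 2) := by
    rw [eq_div_iff hXne]
    linear_combination hK
  clear hu2
  generalize ((r ^ (((1 : ℝ) / 2 + (|m| : ℝ)) - 2) : ℝ) : ℂ) = Z
  rcases abs_choice m with h | h <;>
    rw [h] at hK ⊢ <;>
    push_cast at hK ⊢ <;>
    linear_combination (norm := (field_simp [hrne, hBne]; ring))
      (-(2 : ℂ) * Z * (r : ℂ) ^ 2 * (B : ℂ) *
        Complex.exp (-(B : ℂ) * (r : ℂ) ^ 2 / 4)) * hK
end

section
/- Fix B > 0, m' ∈ ℤ, and k ∈ ℂ, and set a = ½(|m'| + m' + 1 − (k + B)/B) and b = |m'| + 1. If u : (0,∞) → ℂ is twice differentiable and satisfies Kummer's confluent hypergeometric equation x u''(x) + (b − x) u'(x) − a u(x) = 0 for all x > 0, then the function φ(r) = r^{1/2 + |m'|} e^{−Br²/4} u(Br²/2) is twice differentiable on (0,∞) and satisfies the spin-down radial Landau eigenvalue equation −φ''(r) + ( (m'/r + B r/2)² − 1/(4r²) − B ) φ(r) = k φ(r) for all r > 0. -/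
noncomputable def Fa (B p : ℝ) (v : ℝ → ℂ) (r : ℝ) : ℂ :=
  ((r ^ p : ℝ) : ℂ) * Complex.exp (-(B : ℂ) * (r : ℂ) ^ 2 / 4) * v (B * r ^ 2 / 2)

noncomputable def Ma (B q : ℝ) (v : ℝ → ℂ) (r : ℝ) : ℂ :=
  ((q * r ^ (q - 1) : ℝ) : ℂ) * Complex.exp (-(B : ℂ) * (r : ℂ) ^ 2 / 4) * v (B * r ^ 2 / 2)
    + ((r ^ q : ℝ) : ℂ) * ((-(B : ℂ) * r / 2) * Complex.exp (-(B : ℂ) * (r : ℂ) ^ 2 / 4)) *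
        v (B * r ^ 2 / 2)
    + ((r ^ q : ℝ) : ℂ) * Complex.exp (-(B : ℂ) * (r : ℂ) ^ 2 / 4) *
        (deriv v (B * r ^ 2 / 2) * ((B : ℂ) * r))

lemma master (B p : ℝ) (v : ℝ → ℂ) (r : ℝ) (hr : 0 < r)
    (hv : DifferentiableAt ℝ v (B * r ^ 2 / 2)) :
    HasDerivAt (Fa B p v) (Ma B p v r) r := by
  have h1 : HasDerivAt (fun s : ℝ => ((s ^ p : ℝ) : ℂ)) ((p * r ^ (p - 1) : ℝ) : ℂ) r :=
    (Real.hasDerivAt_rpow_const (Or.inl hr.ne')).ofReal_comp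
  have hid : HasDerivAt (fun s : ℝ => ((s : ℂ))) 1 r := by
    simpa using (hasDerivAt_id r).ofReal_comp
  have hin : HasDerivAt (fun s : ℝ => -(B : ℂ) * (s : ℂ) ^ 2 / 4) (-(B : ℂ) * r / 2) r := by
    have h0 := ((hid.mul hid).const_mul (-(B : ℂ))).div_const 4
    have h0' : HasDerivAt (fun s : ℝ => -(B : ℂ) * (s : ℂ) ^ 2 / 4)
        (-(B : ℂ) * (1 * ↑r + ↑r * 1) / 4) r := by
      refine h0.congr_of_eventuallyEq (Filter.Eventually.of_forall fun s => ?_)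
      simp only [Pi.mul_apply]
      ring
    convert h0' using 1
    ring
  have h2 : HasDerivAt (fun s : ℝ => Complex.exp (-(B : ℂ) * (s : ℂ) ^ 2 / 4))
      ((-(B : ℂ) * r / 2) * Complex.exp (-(B : ℂ) * (r : ℂ) ^ 2 / 4)) r := by
    have := hin.cexp
    convert this using 1
    ring
  have hx : HasDerivAt (fun s : ℝ => B * s ^ 2 / 2) (B * r) r := by
    have := (((hasDerivAt_id r).pow 2).const_mul B).div_const 2
    refine this.congr_deriv ?_
    simp only [id]
    ring
  have hcomp : HasDerivAt (fun s : ℝ => v (B * s ^ 2 / 2))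
      (deriv v (B * r ^ 2 / 2) * (B * r)) r := by
    have := hv.hasDerivAt.scomp r hx
    refine this.congr_deriv ?_
    rw [Complex.real_smul]
    push_cast
    ring
  have := (h1.mul h2).mul hcomp
  unfold Fa Ma
  refine this.congr_deriv ?_
  simp only [Pi.mul_apply]
  push_cast
  ring

set_option maxHeartbeats 2000000 in
lemma landau_aux (B ν μ : ℝ) (hB : 0 < B) (hν : ν = μ ∨ ν = -μ) (k a b : ℂ)
    (ha : a = (1 / 2) * ((ν : ℂ) + (μ : ℂ) + 1 - (k + (B : ℂ)) / (B : ℂ)))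
    (hb : b = (ν : ℂ) + 1)
    (u : ℝ → ℂ)
    (hu : ∀ x ∈ Set.Ioi (0 : ℝ), DifferentiableAt ℝ u x ∧ DifferentiableAt ℝ (deriv u) x)
    (hK : ∀ x ∈ Set.Ioi (0 : ℝ),
      (x : ℂ) * deriv (deriv u) x + (b - (x : ℂ)) * deriv u x - a * u x = 0)
    (φ : ℝ → ℂ)
    (hφ : φ = Fa B (1 / 2 + ν) u) :
    (∀ r ∈ Set.Ioi (0 : ℝ), DifferentiableAt ℝ φ r ∧ DifferentiableAt ℝ (deriv φ) r) ∧
    ∀ r ∈ Set.Ioi (0 : ℝ),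
      -(deriv (deriv φ) r) +
        ((((μ / r + B * r / 2) ^ 2 - 1 / (4 * r ^ 2) - B : ℝ)) : ℂ) * φ r = k * φ r := by
  set p : ℝ := 1 / 2 + ν with hp
  set ψ : ℝ → ℂ := fun s => (p : ℂ) * Fa B (p - 1) u s - (B : ℂ) / 2 * Fa B (p + 1) u s
      + (B : ℂ) * Fa B (p + 1) (deriv u) s with hψdef
  have hxm : ∀ r : ℝ, 0 < r → B * r ^ 2 / 2 ∈ Set.Ioi (0 : ℝ) := by
    intro r hr
    simp only [Set.mem_Ioi]
    positivity
  have hD1 : ∀ r ∈ Set.Ioi (0 : ℝ), HasDerivAt φ (ψ r) r := by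
    intro r hr
    rw [Set.mem_Ioi] at hr
    rw [hφ]
    have hm := master B p u r hr (hu _ (hxm r hr)).1
    convert hm using 1
    rw [hψdef]
    simp only [Fa, Ma]
    have h1 : r ^ (p + 1) = r ^ p * r := Real.rpow_add_one hr.ne' p
    rw [h1]
    push_cast
    ring
  have hD2 : ∀ r ∈ Set.Ioi (0 : ℝ), HasDerivAt (deriv φ)
      ((p : ℂ) * Ma B (p - 1) u r - (B : ℂ) / 2 * Ma B (p + 1) u r
        + (B : ℂ) * Ma B (p + 1) (deriv u) r) r := by
    intro r hr
    rw [Set.mem_Ioi] at hr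
    have m1 := (master B (p - 1) u r hr (hu _ (hxm r hr)).1).const_mul (p : ℂ)
    have m2 := (master B (p + 1) u r hr (hu _ (hxm r hr)).1).const_mul ((B : ℂ) / 2)
    have m3 := (master B (p + 1) (deriv u) r hr (hu _ (hxm r hr)).2).const_mul (B : ℂ)
    have hψD : HasDerivAt ψ ((p : ℂ) * Ma B (p - 1) u r - (B : ℂ) / 2 * Ma B (p + 1) u r
        + (B : ℂ) * Ma B (p + 1) (deriv u) r) r := by
      rw [hψdef]
      exact (m1.sub m2).add m3
    have hEq : deriv φ =ᶠ[nhds r] ψ :=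
      Filter.eventuallyEq_of_mem (isOpen_Ioi.mem_nhds (Set.mem_Ioi.mpr hr))
        (fun s hs => (hD1 s hs).deriv)
    exact hψD.congr_of_eventuallyEq hEq
  refine ⟨fun r hr => ⟨(hD1 r hr).differentiableAt, (hD2 r hr).differentiableAt⟩, ?_⟩
  intro r hrm
  have hr : 0 < r := hrm
  have hdd : deriv (deriv φ) r = (p : ℂ) * Ma B (p - 1) u r - (B : ℂ) / 2 * Ma B (p + 1) u r
      + (B : ℂ) * Ma B (p + 1) (deriv u) r := (hD2 r hrm).deriv
  have hKr := hK (B * r ^ 2 / 2) (hxm r hr)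
  have hxne : ((B * r ^ 2 / 2 : ℝ) : ℂ) ≠ 0 := by
    have : (0 : ℝ) < B * r ^ 2 / 2 := hxm r hr
    exact_mod_cast this.ne'
  have hrne : (r : ℂ) ≠ 0 := by exact_mod_cast hr.ne'
  have hBne : (B : ℂ) ≠ 0 := by exact_mod_cast hB.ne'
  have hU2 : deriv (deriv u) (B * r ^ 2 / 2) =
      2 * (a * u (B * r ^ 2 / 2) - (b - ((B * r ^ 2 / 2 : ℝ) : ℂ)) * deriv u (B * r ^ 2 / 2)) /
        ((B : ℂ) * (r : ℂ) ^ 2) := by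
    rw [eq_div_iff (mul_ne_zero hBne (pow_ne_zero 2 hrne))]
    have hc : ((B * r ^ 2 / 2 : ℝ) : ℂ) = (B : ℂ) * (r : ℂ) ^ 2 / 2 := by push_cast; ring
    rw [hc] at hKr
    rw [hc]
    linear_combination 2 * hKr
  rw [hdd, hφ]
  simp only [Fa, Ma]
  rw [hU2]
  have e0 : r ^ (p - 1 - 1) = r ^ (p - 2) := by congr 1; ring
  have e1 : r ^ (p - 1) = r ^ (p - 2) * r := by
    have h := Real.rpow_add_one hr.ne' (p - 2)
    rw [show p - 2 + 1 = p - 1 by ring] at h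
    exact h
  have e2 : r ^ p = r ^ (p - 2) * r * r := by
    have h := Real.rpow_add_one hr.ne' (p - 1)
    rw [show p - 1 + 1 = p by ring, e1] at h
    exact h
  have e3 : r ^ (p + 1) = r ^ (p - 2) * r * r * r := by
    have h := Real.rpow_add_one hr.ne' p
    rw [e2] at h
    exact h
  have e4 : r ^ (p + 1 - 1) = r ^ (p - 2) * r * r := by
    have h : p + 1 - 1 = p := by ring
    rw [h]; exact e2
  rw [e0, e4, e1, e2, e3]
  rw [ha, hb, hp]
  push_cast
  field_simp [hrne, hBne]
  ring_nf
  field_simp [hrne, hBne]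
  rcases hν with h | h <;> subst h <;> push_cast <;> ring

/-- If `u` solves Kummer's confluent hypergeometric equation with parameters
`a = ½(|m'| + m' + 1 − (k + B)/B)`, `b = |m'| + 1`, then
`φ(r) = r^{1/2+|m'|} e^{−Br²/4} u(Br²/2)` is twice differentiable on `(0,∞)` and solves
the spin-down radial Landau eigenvalue equation
`−φ'' + ((m'/r + Br/2)² − 1/(4r²) − B) φ = k φ`. -/
theorem stmt_5 (B : ℝ) (hB : 0 < B) (m' : ℤ) (k : ℂ) (a b : ℂ)
    (ha : a = (1 / 2) * (((|m'| : ℤ) : ℂ) + (m' : ℂ) + 1 - (k + (B : ℂ)) / (B : ℂ)))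
    (hb : b = ((|m'| : ℤ) : ℂ) + 1)
    (u : ℝ → ℂ)
    (hu : ∀ x ∈ Set.Ioi (0 : ℝ), DifferentiableAt ℝ u x ∧ DifferentiableAt ℝ (deriv u) x)
    (hKummer : ∀ x ∈ Set.Ioi (0 : ℝ),
      (x : ℂ) * deriv (deriv u) x + (b - (x : ℂ)) * deriv u x - a * u x = 0)
    (φ : ℝ → ℂ)
    (hφ : ∀ r : ℝ, φ r =
      ((r ^ ((1 : ℝ) / 2 + (|m'| : ℝ)) : ℝ) : ℂ) * Complex.exp (-(B : ℂ) * (r : ℂ) ^ 2 / 4) *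
        u (B * r ^ 2 / 2)) :
    (∀ r ∈ Set.Ioi (0 : ℝ), DifferentiableAt ℝ φ r ∧ DifferentiableAt ℝ (deriv φ) r) ∧
    ∀ r ∈ Set.Ioi (0 : ℝ),
      -(deriv (deriv φ) r) +
        (((((m' : ℝ) / r + B * r / 2) ^ 2 - 1 / (4 * r ^ 2) - B : ℝ)) : ℂ) * φ r = k * φ r := by
  have hν : |(m' : ℝ)| = ((m' : ℤ) : ℝ) ∨ |(m' : ℝ)| = -((m' : ℤ) : ℝ) := abs_choice _
  have ha' : a = (1 / 2) * (((|(m' : ℝ)| : ℝ) : ℂ) + ((((m' : ℤ) : ℝ)) : ℂ) + 1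
      - (k + (B : ℂ)) / (B : ℂ)) := by
    rw [ha, show ((|m'| : ℤ) : ℂ) = ((|(m' : ℝ)| : ℝ) : ℂ) by
      rw [← Complex.ofReal_intCast, Int.cast_abs]]
    push_cast
    ring
  have hb' : b = ((|(m' : ℝ)| : ℝ) : ℂ) + 1 := by
    rw [hb, show ((|m'| : ℤ) : ℂ) = ((|(m' : ℝ)| : ℝ) : ℂ) by
      rw [← Complex.ofReal_intCast, Int.cast_abs]]
  have hφ' : φ = Fa B (1 / 2 + |(m' : ℝ)|) u := by
    funext r
    rw [hφ r]
    rfl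
  exact landau_aux B (|(m' : ℝ)|) ((m' : ℤ) : ℝ) hB hν k a b ha' hb' u hu hKummer φ hφ'
end

section
/- Eigenfunctions of the δ'-cylinder interaction (point-spectrum condition of Theorem 3.2): let q : (0,∞) → ℝ be continuous, E ∈ ℝ, R > 0, α ∈ ℝ, and let F, G : (0,∞) → ℂ be twice continuously differentiable solutions of −y''(r) + q(r) y(r) = E y(r) on (0,∞), with F square-integrable on (0,R) and G square-integrable on (R,∞). Define ψ(r) = G'(R) F(r) for 0 < r < R and ψ(r) = F'(R) G(r) for r > R. Then: (i) ψ is square-integrable on (0,∞); (ii) ψ satisfies −ψ'' + q ψ = E ψ on (0,R) and on (R,∞); (iii) the one-sided limits of ψ' at R agree, ψ'(R⁺) = ψ'(R⁻) = F'(R) G'(R); (iv) ψ satisfies the δ'-boundary condition ψ(R⁺) − ψ(R⁻) = α ψ'(R) if and only if F'(R) G(R) − G'(R) F(R) − α F'(R) G'(R) = 0. In particular, if this last equation holds and F'(R) ≠ 0 and G'(R) ≠ 0, then ψ is a nonzero square-integrable eigenfunction of the radial operator with δ'-interaction of strength α on the circle of radius R, with eigenvalue E. -/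
open MeasureTheory Filter

/-- Eigenfunctions of the δ'-cylinder interaction: with `F, G` being `C²` solutions of
`−y'' + q y = E y` on `(0,∞)`, `F ∈ L²(0,R)`, `G ∈ L²(R,∞)`, and
`ψ = G'(R) F` on `(0,R)`, `ψ = F'(R) G` on `[R,∞)`, the function `ψ` is
square-integrable on `(0,∞)`, solves the eigenvalue equation off `R`, its derivative
has matching one-sided limits `ψ'(R⁺) = ψ'(R⁻) = F'(R)G'(R)`, and `ψ` satisfies the
δ'-boundary condition `ψ(R⁺) − ψ(R⁻) = α ψ'(R)` iff
`F'(R)G(R) − G'(R)F(R) − α F'(R)G'(R) = 0`; in that case, if moreover `F'(R) ≠ 0` and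
`G'(R) ≠ 0`, then `ψ'(R) ≠ 0`, so `ψ` is a nonzero eigenfunction. -/
theorem stmt_10 (q : ℝ → ℝ) (hq : ContinuousOn q (Set.Ioi 0))
    (E : ℝ) (R : ℝ) (hR : 0 < R) (α : ℝ) (F G : ℝ → ℂ)
    (hF : ContDiffOn ℝ 2 F (Set.Ioi 0)) (hG : ContDiffOn ℝ 2 G (Set.Ioi 0))
    (hFeq : ∀ r ∈ Set.Ioi (0 : ℝ),
      -(deriv (deriv F) r) + (q r : ℂ) * F r = (E : ℂ) * F r)
    (hGeq : ∀ r ∈ Set.Ioi (0 : ℝ),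
      -(deriv (deriv G) r) + (q r : ℂ) * G r = (E : ℂ) * G r)
    (hFL2 : MemLp F 2 ((volume : Measure ℝ).restrict (Set.Ioo 0 R)))
    (hGL2 : MemLp G 2 ((volume : Measure ℝ).restrict (Set.Ioi R)))
    (ψ : ℝ → ℂ)
    (hψ : ∀ r : ℝ, ψ r = if r < R then deriv G R * F r else deriv F R * G r) :
    -- (i) square-integrability on (0,∞)
    MemLp ψ 2 ((volume : Measure ℝ).restrict (Set.Ioi 0)) ∧
    -- (ii) the eigenvalue equation away from R
    (∀ r ∈ Set.Ioo (0 : ℝ) R,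
      -(deriv (deriv ψ) r) + (q r : ℂ) * ψ r = (E : ℂ) * ψ r) ∧
    (∀ r ∈ Set.Ioi R,
      -(deriv (deriv ψ) r) + (q r : ℂ) * ψ r = (E : ℂ) * ψ r) ∧
    -- (iii) the one-sided limits of ψ' at R agree and equal F'(R)G'(R)
    Tendsto (deriv ψ) (nhdsWithin R (Set.Ioi R)) (nhds (deriv F R * deriv G R)) ∧
    Tendsto (deriv ψ) (nhdsWithin R (Set.Iio R)) (nhds (deriv F R * deriv G R)) ∧
    -- one-sided limits of ψ itself at R
    Tendsto ψ (nhdsWithin R (Set.Ioi R)) (nhds (deriv F R * G R)) ∧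
    Tendsto ψ (nhdsWithin R (Set.Iio R)) (nhds (deriv G R * F R)) ∧
    -- (iv) the δ'-boundary condition criterion
    ((deriv F R * G R - deriv G R * F R = (α : ℂ) * (deriv F R * deriv G R)) ↔
      (deriv F R * G R - deriv G R * F R - (α : ℂ) * (deriv F R * deriv G R) = 0)) ∧
    -- in particular: nonvanishing of the eigenfunction
    ((deriv F R * G R - deriv G R * F R - (α : ℂ) * (deriv F R * deriv G R) = 0 →
        deriv F R ≠ 0 → deriv G R ≠ 0 → ¬ ∀ r ∈ Set.Ioi (0 : ℝ), ψ r = 0)) := by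
  have hRmem : R ∈ Set.Ioi (0 : ℝ) := hR
  have hRnhds : Set.Ioi (0 : ℝ) ∈ nhds R := isOpen_Ioi.mem_nhds hR
  -- pointwise descriptions of ψ
  have hψlow : ∀ r ∈ Set.Ioo (0 : ℝ) R, ψ r = deriv G R * F r := fun r hr => by
    rw [hψ, if_pos hr.2]
  have hψhigh : ∀ r ∈ Set.Ici R, ψ r = deriv F R * G r := fun r hr => by
    rw [hψ, if_neg (not_lt.2 hr)]
  -- regularity of derivatives
  have hFd1 : ContDiffOn ℝ 1 (deriv F) (Set.Ioi 0) :=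
    hF.deriv_of_isOpen isOpen_Ioi le_rfl
  have hGd1 : ContDiffOn ℝ 1 (deriv G) (Set.Ioi 0) :=
    hG.deriv_of_isOpen isOpen_Ioi le_rfl
  have hFdiff : ∀ r ∈ Set.Ioi (0 : ℝ), DifferentiableAt ℝ F r := fun r hr =>
    (hF.differentiableOn two_ne_zero).differentiableAt (isOpen_Ioi.mem_nhds hr)
  have hGdiff : ∀ r ∈ Set.Ioi (0 : ℝ), DifferentiableAt ℝ G r := fun r hr =>
    (hG.differentiableOn two_ne_zero).differentiableAt (isOpen_Ioi.mem_nhds hr)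
  have hFdiff2 : ∀ r ∈ Set.Ioi (0 : ℝ), DifferentiableAt ℝ (deriv F) r := fun r hr =>
    (hFd1.differentiableOn one_ne_zero).differentiableAt (isOpen_Ioi.mem_nhds hr)
  have hGdiff2 : ∀ r ∈ Set.Ioi (0 : ℝ), DifferentiableAt ℝ (deriv G) r := fun r hr =>
    (hGd1.differentiableOn one_ne_zero).differentiableAt (isOpen_Ioi.mem_nhds hr)
  -- derivative of ψ below R
  have hdψlow : ∀ r ∈ Set.Ioo (0 : ℝ) R, deriv ψ r = deriv G R * deriv F r := by
    intro r hr
    have hev : ψ =ᶠ[nhds r] fun x => deriv G R * F x :=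
      eventually_of_mem (isOpen_Ioo.mem_nhds hr) hψlow
    rw [hev.deriv_eq, deriv_const_mul _ (hFdiff r hr.1)]
  have hdψhigh : ∀ r ∈ Set.Ioi R, deriv ψ r = deriv F R * deriv G r := by
    intro r hr
    have hev : ψ =ᶠ[nhds r] fun x => deriv F R * G x :=
      eventually_of_mem (isOpen_Ioi.mem_nhds hr) fun x hx => hψhigh x (Set.mem_Ici.2 (le_of_lt hx))
    rw [hev.deriv_eq, deriv_const_mul _ (hGdiff r (hR.trans hr))]
  -- second derivative of ψ
  have hd2ψlow : ∀ r ∈ Set.Ioo (0 : ℝ) R,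
      deriv (deriv ψ) r = deriv G R * deriv (deriv F) r := by
    intro r hr
    have hev : deriv ψ =ᶠ[nhds r] fun x => deriv G R * deriv F x :=
      eventually_of_mem (isOpen_Ioo.mem_nhds hr) hdψlow
    rw [hev.deriv_eq, deriv_const_mul _ (hFdiff2 r hr.1)]
  have hd2ψhigh : ∀ r ∈ Set.Ioi R,
      deriv (deriv ψ) r = deriv F R * deriv (deriv G) r := by
    intro r hr
    have hev : deriv ψ =ᶠ[nhds r] fun x => deriv F R * deriv G x :=
      eventually_of_mem (isOpen_Ioi.mem_nhds hr) hdψhigh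
    rw [hev.deriv_eq, deriv_const_mul _ (hGdiff2 r (hR.trans hr))]
  -- eventually below R we are in Ioo 0 R
  have hIooev : ∀ᶠ x in nhdsWithin R (Set.Iio R), x ∈ Set.Ioo 0 R := by
    filter_upwards [self_mem_nhdsWithin,
      eventually_nhdsWithin_of_eventually_nhds (eventually_gt_nhds hR)] with x hx hx0
    exact ⟨hx0, hx⟩
  -- the limits of deriv ψ
  have hlim1 : Tendsto (deriv ψ) (nhdsWithin R (Set.Ioi R))
      (nhds (deriv F R * deriv G R)) := by
    have hc : ContinuousAt (deriv G) R :=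
      (hGd1.continuousOn.continuousAt hRnhds)
    refine Tendsto.congr' ?_ ((continuousAt_const.mul hc).tendsto.mono_left nhdsWithin_le_nhds)
    exact eventually_nhdsWithin_of_forall fun x hx => (hdψhigh x hx).symm
  have hlim2 : Tendsto (deriv ψ) (nhdsWithin R (Set.Iio R))
      (nhds (deriv F R * deriv G R)) := by
    have hc : ContinuousAt (deriv F) R :=
      (hFd1.continuousOn.continuousAt hRnhds)
    have : Tendsto (fun x => deriv G R * deriv F x) (nhdsWithin R (Set.Iio R))
        (nhds (deriv G R * deriv F R)) :=
      (continuousAt_const.mul hc).tendsto.mono_left nhdsWithin_le_nhds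
    rw [mul_comm (deriv F R)]
    refine Tendsto.congr' ?_ this
    filter_upwards [hIooev] with x hx using (hdψlow x hx).symm
  have hlim3 : Tendsto ψ (nhdsWithin R (Set.Ioi R)) (nhds (deriv F R * G R)) := by
    have hc : ContinuousAt G R := hG.continuousOn.continuousAt hRnhds
    refine Tendsto.congr' ?_ ((continuousAt_const.mul hc).tendsto.mono_left nhdsWithin_le_nhds)
    exact eventually_nhdsWithin_of_forall fun x hx => (hψhigh x (Set.mem_Ici.2 (le_of_lt hx))).symm
  have hlim4 : Tendsto ψ (nhdsWithin R (Set.Iio R)) (nhds (deriv G R * F R)) := by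
    have hc : ContinuousAt F R := hF.continuousOn.continuousAt hRnhds
    refine Tendsto.congr' ?_ ((continuousAt_const.mul hc).tendsto.mono_left nhdsWithin_le_nhds)
    filter_upwards [hIooev] with x hx using (hψlow x hx).symm
  refine ⟨?_, ?_, ?_, hlim1, hlim2, hlim3, hlim4, sub_eq_zero.symm, ?_⟩
  · -- (i) square-integrability
    have h1 : MemLp ψ 2 ((volume : Measure ℝ).restrict (Set.Ioo 0 R)) := by
      refine (hFL2.const_mul (deriv G R)).ae_eq ?_
      exact (ae_restrict_iff' measurableSet_Ioo).mpr
        (ae_of_all _ fun x hx => (hψlow x hx).symm)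
    have h2 : MemLp ψ 2 ((volume : Measure ℝ).restrict (Set.Ici R)) := by
      have heq : (volume : Measure ℝ).restrict (Set.Ici R)
          = (volume : Measure ℝ).restrict (Set.Ioi R) :=
        Measure.restrict_congr_set Ioi_ae_eq_Ici.symm
      rw [heq]
      refine (hGL2.const_mul (deriv F R)).ae_eq ?_
      exact (ae_restrict_iff' measurableSet_Ioi).mpr
        (ae_of_all _ fun x hx => (hψhigh x (Set.mem_Ici.2 (le_of_lt hx))).symm)
    have hsplit : ψ = (Set.Iio R).indicator ψ + (Set.Ici R).indicator ψ := by
      funext r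
      rcases lt_or_ge r R with h | h
      · simp [Set.indicator_apply, Set.mem_Iio, Set.mem_Ici, h, not_le.2 h]
      · simp [Set.indicator_apply, Set.mem_Iio, Set.mem_Ici, h, not_lt.2 h]
    rw [hsplit]
    refine MemLp.add ?_ ?_
    · rw [memLp_indicator_iff_restrict measurableSet_Iio,
        Measure.restrict_restrict measurableSet_Iio, Set.Iio_inter_Ioi]
      exact h1
    · rw [memLp_indicator_iff_restrict measurableSet_Ici,
        Measure.restrict_restrict measurableSet_Ici]
      have hsub : Set.Ici R ∩ Set.Ioi 0 = Set.Ici R :=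
        Set.inter_eq_left.mpr fun x hx => lt_of_lt_of_le hR hx
      rw [hsub]
      exact h2
  · -- (ii) on (0,R)
    intro r hr
    rw [hd2ψlow r hr, hψlow r hr]
    have := hFeq r hr.1
    linear_combination deriv G R * this
  · -- (ii) on (R,∞)
    intro r hr
    rw [hd2ψhigh r hr, hψhigh r (Set.mem_Ici.2 (le_of_lt hr))]
    have := hGeq r (hR.trans hr)
    linear_combination deriv F R * this
  · -- nonvanishing
    intro _ hF' hG' hall
    have hzero : Tendsto (deriv ψ) (nhdsWithin R (Set.Iio R)) (nhds 0) := by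
      refine Tendsto.congr' ?_ tendsto_const_nhds
      filter_upwards [hIooev] with x hx
      have hev : ψ =ᶠ[nhds x] fun _ => (0 : ℂ) :=
        eventually_of_mem (isOpen_Ioo.mem_nhds hx) fun y hy => hall y hy.1
      rw [hev.deriv_eq, deriv_const]
    exact mul_ne_zero hF' hG' (tendsto_nhds_unique hlim2 hzero)
end

section
/- Krein coefficient for the δ'-cylinder interaction (algebraic content of Theorem 3.1): let R > 0, α ∈ ℝ, k ∈ ℂ, q : (0,∞) → ℝ continuous, and let F, G : (0,∞) → ℂ be twice continuously differentiable solutions of −y'' + q y = k y on (0,∞). Define ψ(r) = G'(R) F(r) for 0 < r < R and ψ(r) = F'(R) G(r) for r > R, and suppose D := G(R) F'(R) − G'(R) F(R) − α F'(R) G'(R) ≠ 0. Let χ₀ : (0,∞) → ℂ be continuously differentiable in a neighborhood of R, let c ∈ ℂ, and set χ = χ₀ + c ψ. Then the one-sided limits of χ' at R agree, and χ satisfies the δ'-boundary condition χ(R⁺) − χ(R⁻) = α χ'(R) if and only if c = α χ₀'(R) / D. In particular, the correction coefficient in Krein's resolvent formula for the δ'-interaction is α divided by G(R) F'(R) − G'(R)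 F(R) − α F'(R) G'(R) (up to the normalization of ψ). -/
open Filter

/-- Krein coefficient for the δ'-cylinder interaction: with `F, G` being `C²` solutions
of `−y'' + q y = k y` on `(0,∞)`, `ψ = G'(R) F` on `(0,R)` and `ψ = F'(R) G` on
`[R,∞)`, and `D = G(R)F'(R) − G'(R)F(R) − α F'(R)G'(R) ≠ 0`, for any `χ₀` that is `C¹`
near `R` and `χ = χ₀ + c ψ`, the one-sided limits of `χ'` at `R` agree (with common
value `χ'(R) = χ₀'(R) + c F'(R)G'(R)`), and `χ` satisfies the δ'-boundary condition
`χ(R⁺) − χ(R⁻) = α χ'(R)` iff `c = α χ₀'(R) / D`. -/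
theorem stmt_12 (R : ℝ) (hR : 0 < R) (α : ℝ) (k : ℂ)
    (q : ℝ → ℝ) (hq : ContinuousOn q (Set.Ioi 0)) (F G : ℝ → ℂ)
    (hF : ContDiffOn ℝ 2 F (Set.Ioi 0)) (hG : ContDiffOn ℝ 2 G (Set.Ioi 0))
    (hFeq : ∀ r ∈ Set.Ioi (0 : ℝ),
      -(deriv (deriv F) r) + (q r : ℂ) * F r = k * F r)
    (hGeq : ∀ r ∈ Set.Ioi (0 : ℝ),
      -(deriv (deriv G) r) + (q r : ℂ) * G r = k * G r)
    (ψ : ℝ → ℂ)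
    (hψ : ∀ r : ℝ, ψ r = if r < R then deriv G R * F r else deriv F R * G r)
    (D : ℂ)
    (hD : D = G R * deriv F R - deriv G R * F R - (α : ℂ) * (deriv F R * deriv G R))
    (hD0 : D ≠ 0)
    (χ₀ : ℝ → ℂ) (hχ₀ : ∃ ε > (0 : ℝ), ContDiffOn ℝ 1 χ₀ (Set.Ioo (R - ε) (R + ε)))
    (c : ℂ) (χ : ℝ → ℂ) (hχ : ∀ r : ℝ, χ r = χ₀ r + c * ψ r) :
    -- the one-sided limits of χ' at R agree, with common value χ₀'(R) + c F'(R)G'(R)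
    Tendsto (deriv χ) (nhdsWithin R (Set.Ioi R))
      (nhds (deriv χ₀ R + c * (deriv F R * deriv G R))) ∧
    Tendsto (deriv χ) (nhdsWithin R (Set.Iio R))
      (nhds (deriv χ₀ R + c * (deriv F R * deriv G R))) ∧
    -- one-sided limits of χ at R
    Tendsto χ (nhdsWithin R (Set.Ioi R)) (nhds (χ₀ R + c * (deriv F R * G R))) ∧
    Tendsto χ (nhdsWithin R (Set.Iio R)) (nhds (χ₀ R + c * (deriv G R * F R))) ∧
    -- the δ'-boundary condition holds iff c = α χ₀'(R) / D
    (((χ₀ R + c * (deriv F R * G R)) - (χ₀ R + c * (deriv G R * F R))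
        = (α : ℂ) * (deriv χ₀ R + c * (deriv F R * deriv G R))) ↔
      c = (α : ℂ) * deriv χ₀ R / D) := by
  obtain ⟨ε, hε, hχ₀C⟩ := hχ₀
  set ε' : ℝ := min ε R with hε'def
  have hε'0 : 0 < ε' := lt_min hε hR
  have hε'ε : ε' ≤ ε := min_le_left _ _
  have hε'R : ε' ≤ R := min_le_right _ _
  set s : Set ℝ := Set.Ioo (R - ε') (R + ε') with hsdef
  have hopen : IsOpen s := isOpen_Ioo
  have hRmem : R ∈ s := ⟨by linarith, by linarith⟩
  have hsub : s ⊆ Set.Ioo (R - ε) (R + ε) := Set.Ioo_subset_Ioo (by linarith) (by linarith)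
  have hsub0 : s ⊆ Set.Ioi (0 : ℝ) := fun x hx => lt_of_le_of_lt (by linarith) hx.1
  have hχ₀C' : ContDiffOn ℝ 1 χ₀ s := hχ₀C.mono hsub
  -- continuity facts at R
  have hχ₀cont : ContinuousAt χ₀ R :=
    hχ₀C'.continuousOn.continuousAt (hopen.mem_nhds hRmem)
  have hχ₀dcont : ContinuousAt (deriv χ₀) R :=
    (hχ₀C'.continuousOn_deriv_of_isOpen hopen le_rfl).continuousAt (hopen.mem_nhds hRmem)
  have hFcont : ContinuousAt F R :=
    hF.continuousOn.continuousAt (isOpen_Ioi.mem_nhds hR)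
  have hGcont : ContinuousAt G R :=
    hG.continuousOn.continuousAt (isOpen_Ioi.mem_nhds hR)
  have hFdcont : ContinuousAt (deriv F) R :=
    (hF.continuousOn_deriv_of_isOpen isOpen_Ioi (by norm_num)).continuousAt
      (isOpen_Ioi.mem_nhds hR)
  have hGdcont : ContinuousAt (deriv G) R :=
    (hG.continuousOn_deriv_of_isOpen isOpen_Ioi (by norm_num)).continuousAt
      (isOpen_Ioi.mem_nhds hR)
  -- differentiability on s
  have hχ₀diff : ∀ r ∈ s, DifferentiableAt ℝ χ₀ r := fun r hr =>
    (hχ₀C'.differentiableOn one_ne_zero).differentiableAt (hopen.mem_nhds hr)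
  have hFdiff : ∀ r ∈ s, DifferentiableAt ℝ F r := fun r hr =>
    (hF.differentiableOn (by norm_num)).differentiableAt (isOpen_Ioi.mem_nhds (hsub0 hr))
  have hGdiff : ∀ r ∈ s, DifferentiableAt ℝ G r := fun r hr =>
    (hG.differentiableOn (by norm_num)).differentiableAt (isOpen_Ioi.mem_nhds (hsub0 hr))
  -- membership of one-sided intervals in one-sided nhds
  have hmemR : Set.Ioo R (R + ε') ∈ nhdsWithin R (Set.Ioi R) :=
    Ioo_mem_nhdsGT_of_mem ⟨le_refl R, by linarith⟩
  have hmemL : Set.Ioo (R - ε') R ∈ nhdsWithin R (Set.Iio R) :=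
    Ioo_mem_nhdsLT_of_mem ⟨by linarith, le_refl R⟩
  have hsubR : Set.Ioo R (R + ε') ⊆ s := fun x hx => ⟨by linarith [hx.1], hx.2⟩
  have hsubL : Set.Ioo (R - ε') R ⊆ s := fun x hx => ⟨hx.1, by linarith [hx.2]⟩
  -- local formulas for χ on each side
  have hχR : ∀ x ∈ Set.Ioo R (R + ε'), χ x = χ₀ x + c * deriv F R * G x := by
    intro x hx
    rw [hχ x, hψ x, if_neg (not_lt.2 hx.1.le)]; ring
  have hχL : ∀ x ∈ Set.Ioo (R - ε') R, χ x = χ₀ x + c * deriv G R * F x := by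
    intro x hx
    rw [hχ x, hψ x, if_pos hx.2]; ring
  -- derivative formulas on each side
  have hderivR : ∀ x ∈ Set.Ioo R (R + ε'),
      deriv χ x = deriv χ₀ x + c * deriv F R * deriv G x := by
    intro x hx
    have heq : χ =ᶠ[nhds x] fun y => χ₀ y + c * deriv F R * G y :=
      Filter.eventuallyEq_of_mem (isOpen_Ioo.mem_nhds hx) hχR
    rw [heq.deriv_eq]
    rw [deriv_fun_add (hχ₀diff x (hsubR hx))
      (((hGdiff x (hsubR hx)).const_mul (c * deriv F R))),
      deriv_const_mul _ (hGdiff x (hsubR hx))]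
  have hderivL : ∀ x ∈ Set.Ioo (R - ε') R,
      deriv χ x = deriv χ₀ x + c * deriv G R * deriv F x := by
    intro x hx
    have heq : χ =ᶠ[nhds x] fun y => χ₀ y + c * deriv G R * F y :=
      Filter.eventuallyEq_of_mem (isOpen_Ioo.mem_nhds hx) hχL
    rw [heq.deriv_eq]
    rw [deriv_fun_add (hχ₀diff x (hsubL hx))
      (((hFdiff x (hsubL hx)).const_mul (c * deriv G R))),
      deriv_const_mul _ (hFdiff x (hsubL hx))]
  refine ⟨?_, ?_, ?_, ?_, ?_⟩
  · -- right limit of deriv χ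
    have h0 : Tendsto (fun x => deriv χ₀ x + c * deriv F R * deriv G x)
        (nhds R) (nhds (deriv χ₀ R + c * deriv F R * deriv G R)) :=
      (hχ₀dcont.tendsto).add ((hGdcont.tendsto).const_mul (c * deriv F R))
    have h1 : Tendsto (fun x => deriv χ₀ x + c * deriv F R * deriv G x)
        (nhdsWithin R (Set.Ioi R)) (nhds (deriv χ₀ R + c * (deriv F R * deriv G R))) := by
      rw [show deriv χ₀ R + c * (deriv F R * deriv G R)
        = deriv χ₀ R + c * deriv F R * deriv G R by ring]
      exact h0.mono_left nhdsWithin_le_nhds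
    refine h1.congr' ?_
    filter_upwards [hmemR] with x hx using (hderivR x hx).symm
  · -- left limit of deriv χ
    have h0 : Tendsto (fun x => deriv χ₀ x + c * deriv G R * deriv F x)
        (nhds R) (nhds (deriv χ₀ R + c * deriv G R * deriv F R)) :=
      (hχ₀dcont.tendsto).add ((hFdcont.tendsto).const_mul (c * deriv G R))
    have h1 : Tendsto (fun x => deriv χ₀ x + c * deriv G R * deriv F x)
        (nhdsWithin R (Set.Iio R)) (nhds (deriv χ₀ R + c * (deriv F R * deriv G R))) := by
      rw [show deriv χ₀ R + c * (deriv F R * deriv G R)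
        = deriv χ₀ R + c * deriv G R * deriv F R by ring]
      exact h0.mono_left nhdsWithin_le_nhds
    refine h1.congr' ?_
    filter_upwards [hmemL] with x hx using (hderivL x hx).symm
  · -- right limit of χ
    have h0 : Tendsto (fun x => χ₀ x + c * deriv F R * G x)
        (nhds R) (nhds (χ₀ R + c * deriv F R * G R)) :=
      (hχ₀cont.tendsto).add ((hGcont.tendsto).const_mul (c * deriv F R))
    have h1 : Tendsto (fun x => χ₀ x + c * deriv F R * G x)
        (nhdsWithin R (Set.Ioi R)) (nhds (χ₀ R + c * (deriv F R * G R))) := by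
      rw [show χ₀ R + c * (deriv F R * G R) = χ₀ R + c * deriv F R * G R by ring]
      exact h0.mono_left nhdsWithin_le_nhds
    refine h1.congr' ?_
    filter_upwards [hmemR] with x hx using (hχR x hx).symm
  · -- left limit of χ
    have h0 : Tendsto (fun x => χ₀ x + c * deriv G R * F x)
        (nhds R) (nhds (χ₀ R + c * deriv G R * F R)) :=
      (hχ₀cont.tendsto).add ((hFcont.tendsto).const_mul (c * deriv G R))
    have h1 : Tendsto (fun x => χ₀ x + c * deriv G R * F x)
        (nhdsWithin R (Set.Iio R)) (nhds (χ₀ R + c * (deriv G R * F R))) := by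
      rw [show χ₀ R + c * (deriv G R * F R) = χ₀ R + c * deriv G R * F R by ring]
      exact h0.mono_left nhdsWithin_le_nhds
    refine h1.congr' ?_
    filter_upwards [hmemL] with x hx using (hχL x hx).symm
  · -- the algebraic equivalence
    subst hD
    rw [eq_div_iff hD0]
    constructor <;> intro h <;> linear_combination h
end
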